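/- For every k ≥ 1, every strictly increasing sequence of positive real numbers 0 < s₁ < s₂ < ⋯ < s_k, and every sequence of positive natural numbers n₁, …, n_k, let f : [0,∞) → [0,∞) be the continuous piecewise linear function determined by: f(0) = 0; f has slope n_i on the interval [s_{i−1}, s_i] for each i ∈ {1,…,k} (where s₀ := 0); and f is constant equal to f(s_k) on [s_k, ∞). Then there exists a compact metric space X equipped with a Borel measure μ and a point x ∈ X such that for every s ≥ 0, μ(B_x(e^s)) = e^{f(s)}; that is, the volume growth transform satisfies VGT_x(s) = f(s) for all s ≥ 0. -/

import Mathlib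

open Set Filter Topology MeasureTheory

private lemma vgt_locateR (s : ℕ → ℝ) : ∀ (k : ℕ) (t : ℝ), s 0 ≤ t → t < s k →
    ∃ i, i < k ∧ s i ≤ t ∧ t < s (i + 1) := by
  intro k
  induction k with
  | zero => intro t h0 hk; exact absurd (h0.trans_lt hk) (lt_irrefl _)
  | succ k ih =>
    intro t h0 hk
    by_cases h : t < s k
    · obtain ⟨i, hi, h1, h2⟩ := ih t h0 h
      exact ⟨i, Nat.lt_succ_of_lt hi, h1, h2⟩
    · exact ⟨k, Nat.lt_succ_self k, not_lt.1 h, hk⟩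

private lemma vgt_locateL (s : ℕ → ℝ) : ∀ (k : ℕ) (t : ℝ), s 0 < t → t ≤ s k →
    ∃ i, i < k ∧ s i < t ∧ t ≤ s (i + 1) := by
  intro k
  induction k with
  | zero => intro t h0 hk; exact absurd (h0.trans_le hk) (lt_irrefl _)
  | succ k ih =>
    intro t h0 hk
    by_cases h : t ≤ s k
    · obtain ⟨i, hi, h1, h2⟩ := ih t h0 h
      exact ⟨i, Nat.lt_succ_of_lt hi, h1, h2⟩
    · exact ⟨k, Nat.lt_succ_self k, not_le.1 h, hk⟩

/-- Auxiliary monotone function: cumulative measure function for the VGT realization. -/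
noncomputable def vgtH (f : ℝ → ℝ) (t : ℝ) : ℝ :=
  if t < 0 then 0 else if t < 1 then 1 else Real.exp (f (Real.log t))

theorem vgt_realization (k : ℕ) (hk : 1 ≤ k)
    (s : ℕ → ℝ) (hs0 : s 0 = 0) (hs : ∀ i < k, s i < s (i + 1))
    (n : ℕ → ℕ) (hn : ∀ i < k, 0 < n i)
    (f : ℝ → ℝ) (hf0 : f 0 = 0)
    (hslope : ∀ i < k, ∀ t ∈ Set.Icc (s i) (s (i + 1)),
      f t = f (s i) + (n i : ℝ) * (t - s i))
    (hconst : ∀ t : ℝ, s k ≤ t → f t = f (s k)) :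
    ∃ (X : Type) (_ : MetricSpace X) (_ : CompactSpace X)
      (_ : MeasurableSpace X) (_ : BorelSpace X)
      (μ : MeasureTheory.Measure X) (x : X),
      ∀ u : ℝ, 0 ≤ u →
        μ (Metric.ball x (Real.exp u)) = ENNReal.ofReal (Real.exp (f u)) := by
  -- basic facts about `s`
  have s_nonneg : ∀ j, j ≤ k → 0 ≤ s j := by
    intro j
    induction j with
    | zero => intro _; rw [hs0]
    | succ j ih =>
      intro hj
      exact le_of_lt (lt_of_le_of_lt (ih (by omega)) (hs j (by omega)))
  have hsk0 : 0 < s k := by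
    have h1 := hs (k - 1) (by omega)
    have h2 := s_nonneg (k - 1) (by omega)
    have h3 : k - 1 + 1 = k := by omega
    rw [h3] at h1
    linarith
  -- monotonicity of `f`
  have fmono_bdd : ∀ j, j ≤ k → ∀ a b : ℝ, 0 ≤ a → a ≤ b → b ≤ s j → f a ≤ f b := by
    intro j
    induction j with
    | zero =>
      intro _ a b ha hab hb
      rw [hs0] at hb
      have : a = b := le_antisymm hab (by linarith)
      rw [this]
    | succ j ih =>
      intro hjk a b ha hab hb
      have hjk' : j ≤ k := by omega
      have hjlt : j < k := by omega
      by_cases hbj : b ≤ s j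
      · exact ih hjk' a b ha hab hbj
      · push_neg at hbj
        have hfb : f b = f (s j) + (n j : ℝ) * (b - s j) := hslope j hjlt b ⟨hbj.le, hb⟩
        by_cases haj : a ≤ s j
        · have h1 : f a ≤ f (s j) := ih hjk' a (s j) ha haj le_rfl
          have h2 : (0 : ℝ) ≤ (n j : ℝ) * (b - s j) :=
            mul_nonneg (Nat.cast_nonneg _) (by linarith)
          linarith
        · push_neg at haj
          have hfa : f a = f (s j) + (n j : ℝ) * (a - s j) :=
            hslope j hjlt a ⟨haj.le, hab.trans hb⟩
          have h2 : (n j : ℝ) * (a - s j) ≤ (n j : ℝ) * (b - s j) :=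
            mul_le_mul_of_nonneg_left (by linarith) (Nat.cast_nonneg _)
          linarith
  have fmono : ∀ a b : ℝ, 0 ≤ a → a ≤ b → f a ≤ f b := by
    intro a b ha hab
    by_cases hb : b ≤ s k
    · exact fmono_bdd k le_rfl a b ha hab hb
    · push_neg at hb
      rw [hconst b hb.le]
      by_cases haa : a ≤ s k
      · exact fmono_bdd k le_rfl a (s k) ha haa le_rfl
      · rw [hconst a (le_of_not_ge haa)]
  have fnn : ∀ u : ℝ, 0 ≤ u → 0 ≤ f u := by
    intro u hu
    have := fmono 0 u le_rfl hu
    rw [hf0] at this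
    exact this
  -- one-sided continuity of `f`
  have frc : ∀ u : ℝ, 0 ≤ u → ContinuousWithinAt f (Ici u) u := by
    intro u hu
    by_cases huk : u < s k
    · obtain ⟨i, hik, h1, h2⟩ := vgt_locateR s k u (by rw [hs0]; exact hu) huk
      have hg : ContinuousWithinAt (fun t => f (s i) + (n i : ℝ) * (t - s i)) (Ici u) u :=
        (by continuity : Continuous fun t => f (s i) + (n i : ℝ) * (t - s i)).continuousWithinAt
      refine hg.congr_of_eventuallyEq ?_ (hslope i hik u ⟨h1, h2.le⟩)
      filter_upwards [Ico_mem_nhdsGE_of_mem (⟨le_rfl, h2⟩ : u ∈ Ico u (s (i + 1)))] with t ht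
      exact hslope i hik t ⟨h1.trans ht.1, ht.2.le⟩
    · push_neg at huk
      refine (continuousWithinAt_const : ContinuousWithinAt (fun _ => f (s k)) (Ici u)
        u).congr_of_eventuallyEq ?_ (hconst u huk)
      filter_upwards [self_mem_nhdsWithin] with t ht
      exact hconst t (huk.trans ht)
  have flc : ∀ u : ℝ, 0 < u → ContinuousWithinAt f (Iio u) u := by
    intro u hu
    by_cases huk : u ≤ s k
    · obtain ⟨i, hik, h1, h2⟩ := vgt_locateL s k u (by rw [hs0]; exact hu) huk
      have hg : ContinuousWithinAt (fun t => f (s i) + (n i : ℝ) * (t - s i)) (Iio u) u :=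
        (by continuity : Continuous fun t => f (s i) + (n i : ℝ) * (t - s i)).continuousWithinAt
      refine hg.congr_of_eventuallyEq ?_ (hslope i hik u ⟨h1.le, h2⟩)
      filter_upwards [Ioo_mem_nhdsLT_of_mem (⟨h1, le_rfl⟩ : u ∈ Ioc (s i) u)] with t ht
      exact hslope i hik t ⟨ht.1.le, ht.2.le.trans h2⟩
    · push_neg at huk
      refine (continuousWithinAt_const : ContinuousWithinAt (fun _ => f (s k)) (Iio u)
        u).congr_of_eventuallyEq ?_ (hconst u huk.le)
      filter_upwards [Ioo_mem_nhdsLT_of_mem (⟨huk, le_rfl⟩ : u ∈ Ioc (s k) u)] with t ht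
      exact hconst t ht.1.le
  -- facts about vgtH f
  have Hval : ∀ t : ℝ, 1 ≤ t → vgtH f t = Real.exp (f (Real.log t)) := by
    intro t ht
    unfold vgtH
    rw [if_neg (by linarith), if_neg (by linarith)]
  have Hmono : Monotone (vgtH f) := by
    intro a b hab
    unfold vgtH
    rcases lt_or_ge a 0 with ha0 | ha0
    · rw [if_pos ha0]
      split_ifs with h1 h2
      · exact le_rfl
      · exact zero_le_one
      · exact (Real.exp_pos _).le
    · rw [if_neg (not_lt.2 ha0)]
      rcases lt_or_ge a 1 with ha1 | ha1
      · rw [if_pos ha1, if_neg (not_lt.2 (ha0.trans hab))]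
        by_cases hb1 : b < 1
        · rw [if_pos hb1]
        · push_neg at hb1
          rw [if_neg (not_lt.2 hb1)]
          calc (1 : ℝ) = Real.exp 0 := Real.exp_zero.symm
            _ ≤ _ := Real.exp_le_exp.2 (fnn _ (Real.log_nonneg hb1))
      · have hb1 : 1 ≤ b := ha1.trans hab
        rw [if_neg (not_lt.2 ha1), if_neg (not_lt.2 (by linarith : (0:ℝ) ≤ b)),
          if_neg (not_lt.2 hb1)]
        exact Real.exp_le_exp.2
          (fmono _ _ (Real.log_nonneg ha1) (Real.log_le_log (by linarith) hab))
  have Hrc : ∀ t : ℝ, ContinuousWithinAt (vgtH f) (Ici t) t := by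
    intro t
    rcases lt_or_ge t 0 with ht | ht
    · refine (continuousWithinAt_const : ContinuousWithinAt (fun _ => (0 : ℝ)) (Ici t)
        t).congr_of_eventuallyEq ?_ ?_
      · filter_upwards [Ico_mem_nhdsGE_of_mem (⟨le_rfl, ht⟩ : t ∈ Ico t 0)] with x hx
        unfold vgtH
        rw [if_pos hx.2]
      · unfold vgtH; rw [if_pos ht]
    · rcases lt_or_ge t 1 with ht1 | ht1
      · refine (continuousWithinAt_const : ContinuousWithinAt (fun _ => (1 : ℝ)) (Ici t)
          t).congr_of_eventuallyEq ?_ ?_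
        · filter_upwards [Ico_mem_nhdsGE_of_mem (⟨le_rfl, ht1⟩ : t ∈ Ico t 1)] with x hx
          unfold vgtH
          rw [if_neg (not_lt.2 (ht.trans hx.1)), if_pos hx.2]
        · unfold vgtH; rw [if_neg (not_lt.2 ht), if_pos ht1]
      · have hcomp : Tendsto (fun x => Real.exp (f (Real.log x))) (𝓝[≥] t)
            (𝓝 (Real.exp (f (Real.log t)))) := by
          have hlog : Tendsto Real.log (𝓝[≥] t) (𝓝[≥] Real.log t) := by
            apply tendsto_nhdsWithin_of_tendsto_nhds_of_eventually_within
            · exact (Real.continuousAt_log (by linarith)).tendsto.mono_left nhdsWithin_le_nhds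
            · filter_upwards [self_mem_nhdsWithin] with x hx
              exact Real.log_le_log (by linarith) hx
          have hf' : Tendsto f (𝓝[≥] Real.log t) (𝓝 (f (Real.log t))) :=
            frc _ (Real.log_nonneg ht1)
          exact Real.continuous_exp.continuousAt.tendsto.comp (hf'.comp hlog)
        have : ContinuousWithinAt (fun x => Real.exp (f (Real.log x))) (Ici t) t := hcomp
        refine this.congr_of_eventuallyEq ?_ (Hval t ht1)
        filter_upwards [self_mem_nhdsWithin] with x hx
        exact Hval x (ht1.trans hx)
  set h : StieltjesFunction ℝ := ⟨vgtH f, Hmono, Hrc⟩ with hdef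
  have hcoe : (h : ℝ → ℝ) = vgtH f := rfl
  have hnb : ∀ r : ℝ, 𝓝[<] r ≠ ⊥ := fun r => (inferInstance : (𝓝[<] r).NeBot).ne
  have hl0 : Function.leftLim (vgtH f) 0 = 0 := by
    apply leftLim_eq_of_tendsto
    apply Tendsto.congr' ?_ (tendsto_const_nhds : Tendsto (fun _ => (0 : ℝ)) _ _)
    filter_upwards [Ioo_mem_nhdsLT (show (-1 : ℝ) < 0 by norm_num)] with x hx
    unfold vgtH
    rw [if_pos hx.2]
  have hllim : ∀ r : ℝ, 1 ≤ r → Function.leftLim (vgtH f) r = vgtH f r := by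
    intro r hr
    rcases eq_or_lt_of_le hr with heq | hlt
    · apply leftLim_eq_of_tendsto
      rw [← heq, Hval 1 le_rfl, Real.log_one, hf0, Real.exp_zero]
      apply Tendsto.congr' ?_ (tendsto_const_nhds : Tendsto (fun _ => (1 : ℝ)) _ _)
      filter_upwards [Ioo_mem_nhdsLT (show (0 : ℝ) < 1 by norm_num)] with x hx
      unfold vgtH
      rw [if_neg (not_lt.2 hx.1.le), if_pos hx.2]
    · apply leftLim_eq_of_tendsto
      rw [Hval r hr]
      have hlog : Tendsto Real.log (𝓝[<] r) (𝓝[<] Real.log r) := by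
        apply tendsto_nhdsWithin_of_tendsto_nhds_of_eventually_within
        · exact (Real.continuousAt_log (by linarith)).tendsto.mono_left nhdsWithin_le_nhds
        · filter_upwards [Ioo_mem_nhdsLT (show (1 : ℝ) < r from hlt)] with x hx
          exact Real.log_lt_log (by linarith [hx.1]) hx.2
      have hfl : Tendsto f (𝓝[<] Real.log r) (𝓝 (f (Real.log r))) :=
        flc _ (Real.log_pos hlt)
      have hcomp := Real.continuous_exp.continuousAt.tendsto.comp (hfl.comp hlog)
      apply Tendsto.congr' ?_ hcomp
      filter_upwards [Ioo_mem_nhdsLT hlt] with x hx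
      exact (Hval x hx.1.le).symm
  have h1R : (1 : ℝ) ≤ Real.exp (s k) := by
    rw [← Real.exp_zero]; exact Real.exp_le_exp.2 hsk0.le
  have key1 : ∀ r : ℝ, 1 ≤ r →
      h.measure (Ico 0 r) = ENNReal.ofReal (Real.exp (f (Real.log r))) := by
    intro r hr
    rw [StieltjesFunction.measure_Ico, hcoe, hl0, hllim r hr, Hval r hr, sub_zero]
  have key2 : h.measure (Icc 0 (Real.exp (s k))) = ENNReal.ofReal (Real.exp (f (s k))) := by
    rw [StieltjesFunction.measure_Icc, hcoe, hl0, Hval _ h1R, Real.log_exp, sub_zero]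
  -- the space
  refine ⟨Set.Icc (0 : ℝ) (Real.exp (s k)), inferInstance,
    isCompact_iff_compactSpace.mp isCompact_Icc, inferInstance, inferInstance,
    MeasureTheory.Measure.comap Subtype.val h.measure,
    ⟨0, le_rfl, (Real.exp_pos _).le⟩, ?_⟩
  intro u hu
  have h1u : (1 : ℝ) ≤ Real.exp u := by
    rw [← Real.exp_zero]; exact Real.exp_le_exp.2 hu
  have hemb : MeasurableEmbedding
      (Subtype.val : (Set.Icc (0 : ℝ) (Real.exp (s k))) → ℝ) :=
    MeasurableEmbedding.subtype_coe measurableSet_Icc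
  rw [hemb.comap_apply]
  have hball : Metric.ball (⟨0, le_rfl, (Real.exp_pos _).le⟩ :
      Set.Icc (0 : ℝ) (Real.exp (s k))) (Real.exp u)
      = Subtype.val ⁻¹' Metric.ball (0 : ℝ) (Real.exp u) := by
    ext y
    simp [Metric.mem_ball, Subtype.dist_eq]
  rw [hball, Subtype.image_preimage_coe]
  rcases le_or_gt (Real.exp u) (Real.exp (s k)) with hle | hlt
  · have hset : Set.Icc (0 : ℝ) (Real.exp (s k)) ∩ Metric.ball (0 : ℝ) (Real.exp u)
        = Ico 0 (Real.exp u) := by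
      rw [Real.ball_eq_Ioo]
      ext t
      simp only [mem_inter_iff, mem_Icc, mem_Ioo, mem_Ico, zero_sub, zero_add]
      constructor
      · rintro ⟨⟨h1, h2⟩, h3, h4⟩; exact ⟨h1, h4⟩
      · rintro ⟨h1, h2⟩
        exact ⟨⟨h1, h2.le.trans hle⟩, by linarith [Real.exp_pos u], h2⟩
    rw [hset, key1 _ h1u, Real.log_exp]
  · have hset : Set.Icc (0 : ℝ) (Real.exp (s k)) ∩ Metric.ball (0 : ℝ) (Real.exp u)
        = Set.Icc (0 : ℝ) (Real.exp (s k)) := by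
      apply Set.inter_eq_self_of_subset_left
      intro t ht
      rw [Real.ball_eq_Ioo]
      exact ⟨by simp only [zero_sub]; linarith [ht.1, Real.exp_pos u],
        by simp only [zero_add]; exact lt_of_le_of_lt ht.2 hlt⟩
    have husk : s k ≤ u := (Real.exp_lt_exp.1 hlt).le
    rw [hset, key2, hconst u husk]
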